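/- arXiv:1412.0251 — 4 statements merged into one kernel-verified Lean document; each statement's English description precedes it below -/
import Mathlib

section
/- Let u₀ : ℤ → ℝ be a discrete 1D signal and k₀ : ℤ → ℝ a kernel with k₀ ≥ 0 and Σ k₀ = 1. Define f = k₀ ∗ u₀ and J(u) = Σ_x |u[x+1] − u[x]| (discrete total variation, assuming u₀ has finite support variation, i.e., u₀ is eventually constant on both sides). Then J(f) ≤ J(u₀). -/
open Function Pointwise

/-- The discrete total variation of a blurred signal is no larger than that of the
sharp signal, for a nonnegative kernel summing to one. -/
theorem tv_blur_le (u₀ k₀ : ℤ → ℝ)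
    (hk0 : ∀ y, 0 ≤ k₀ y) (hkfin : (Function.support k₀).Finite)
    (hk1 : ∑ᶠ y, k₀ y = 1)
    (hconst : ∃ (A B : ℝ) (N : ℤ), (∀ x ≤ -N, u₀ x = A) ∧ ∀ x ≥ N, u₀ x = B)
    (f : ℤ → ℝ) (hf : ∀ x, f x = ∑ᶠ y, k₀ y * u₀ (x - y)) :
    ∑ᶠ x : ℤ, |f (x + 1) - f x| ≤ ∑ᶠ x : ℤ, |u₀ (x + 1) - u₀ x| := by
  classical
  obtain ⟨A, B, N, hA, hB⟩ := hconst
  set g : ℤ → ℝ := fun x => |u₀ (x + 1) - u₀ x| with hg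
  set K : Finset ℤ := hkfin.toFinset with hK
  set T : Finset ℤ := Finset.Ioo (-N - 1) N with hT
  have hgsupp : support g ⊆ ↑T := by
    intro x hx
    simp only [mem_support, hg] at hx
    by_contra hxT
    apply hx
    have h2 : x ≤ -N - 1 ∨ N ≤ x := by
      by_contra h
      push_neg at h
      exact hxT (Finset.mem_Ioo.mpr ⟨by omega, by omega⟩)
    rcases h2 with h | h
    · rw [hA (x + 1) (by omega), hA x (by omega)]; simp
    · rw [hB (x + 1) (by omega), hB x (by omega)]; simp
  have hfeq : ∀ x, f x = ∑ y ∈ K, k₀ y * u₀ (x - y) := by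
    intro x
    rw [hf x]
    apply finsum_eq_finset_sum_of_support_subset
    intro y hy
    have hy' : k₀ y ≠ 0 := fun h => hy (by simp [h])
    simpa [hK, Set.Finite.mem_toFinset] using hy'
  have hdf : ∀ x, f (x + 1) - f x = ∑ y ∈ K, k₀ y * (u₀ (x - y + 1) - u₀ (x - y)) := by
    intro x
    rw [hfeq, hfeq, ← Finset.sum_sub_distrib]
    refine Finset.sum_congr rfl fun y _ => ?_
    have h3 : x + 1 - y = x - y + 1 := by ring
    rw [h3]; ring
  have hbound : ∀ x, |f (x + 1) - f x| ≤ ∑ y ∈ K, k₀ y * g (x - y) := by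
    intro x
    rw [hdf]
    refine (Finset.abs_sum_le_sum_abs _ _).trans ?_
    refine Finset.sum_le_sum fun y _ => ?_
    rw [abs_mul, abs_of_nonneg (hk0 y)]
  set S : Finset ℤ := K + T with hS
  have hdfsupp : support (fun x => |f (x + 1) - f x|) ⊆ ↑S := by
    intro x hx
    simp only [mem_support] at hx
    by_contra hxS
    apply hx
    rw [abs_eq_zero, hdf]
    refine Finset.sum_eq_zero fun y hy => ?_
    have hns : x - y ∉ support g := by
      intro hmem
      exact hxS (Finset.mem_add.mpr ⟨y, hy, x - y, hgsupp hmem, by ring⟩)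
    simp only [mem_support, not_not, hg, abs_eq_zero] at hns
    rw [hns, mul_zero]
  have hJg : ∑ᶠ x : ℤ, |u₀ (x + 1) - u₀ x| = ∑ x ∈ T, g x :=
    finsum_eq_finset_sum_of_support_subset g hgsupp
  have hk1' : ∑ y ∈ K, k₀ y = 1 := by
    rw [← hk1]
    exact (finsum_eq_finset_sum_of_support_subset _ (by simp [hK])).symm
  have key : ∀ y ∈ K, ∑ x ∈ S, g (x - y) = ∑ x ∈ T, g x := by
    intro y hy
    have h1 : ∑ x ∈ S, g (x - y) = ∑ z ∈ S.image (fun x => x - y), g z :=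
      (Finset.sum_image (fun a _ b _ h => by omega)).symm
    have h2 : support g ⊆ ↑(S.image (fun x => x - y)) := by
      intro z hz
      simp only [Finset.coe_image, Set.mem_image]
      exact ⟨z + y, Finset.mem_add.mpr ⟨y, hy, z, hgsupp hz, by ring⟩, by ring⟩
    rw [h1, ← finsum_eq_finset_sum_of_support_subset g h2,
      finsum_eq_finset_sum_of_support_subset g hgsupp]
  calc ∑ᶠ x : ℤ, |f (x + 1) - f x| = ∑ x ∈ S, |f (x + 1) - f x| :=
        finsum_eq_finset_sum_of_support_subset _ hdfsupp
    _ ≤ ∑ x ∈ S, ∑ y ∈ K, k₀ y * g (x - y) := Finset.sum_le_sum fun x _ => hbound x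
    _ = ∑ y ∈ K, k₀ y * ∑ x ∈ S, g (x - y) := by
        rw [Finset.sum_comm]
        exact Finset.sum_congr rfl fun y _ => (Finset.mul_sum _ _ _).symm
    _ = ∑ y ∈ K, k₀ y * ∑ x ∈ T, g x :=
        Finset.sum_congr rfl fun y hy => by rw [key y hy]
    _ = (∑ y ∈ K, k₀ y) * ∑ x ∈ T, g x := by rw [Finset.sum_mul]
    _ = ∑ x ∈ T, g x := by rw [hk1', one_mul]
    _ = ∑ᶠ x : ℤ, |u₀ (x + 1) - u₀ x| := hJg.symm
end

section
/- Let f_x : ℤ → ℝ satisfy f_x[−2] = δ₁Δ, f_x[−1] = (1 − δ₁ − δ₂)Δ, f_x[0] = δ₂Δ, and f_x[x] = 0 otherwise, where Δ = U₂ − U₁ > 0, δ₁, δ₂ ≥ 0, δ₁ + δ₂ ≤ 1. Suppose 1 > max(2δ₁ + δ₂, 2δ₂ + δ₁) and λ ≥ Δ · max(δ₁, δ₂). Then the coordinatewise soft-thresholding solution û_x[x] = sign(f_x[x]) max(|f_x[x]| − λ, 0) of the problem min_{u_x} (1/2) Σ_x (u_x[x] − f_x[x])² + λ Σ_x |u_x[x]|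 is supported only at x = −1, where it equals (1 − δ₁ − δ₂ − max(δ₁, δ₂)) Δ if λ = Δ·max(δ₁,δ₂); more generally û_x[−1] = max((1 − δ₁ − δ₂)Δ − λ, 0) and û_x[x] = 0 for x ≠ −1 whenever λ ≥ Δ·max(δ₁, δ₂) and λ < (1 − δ₁ − δ₂)Δ. -/
/-- Gradient-domain TV denoising of a blurred step via soft-thresholding yields a
signal supported only at the true edge position `x = -1`. -/
theorem soft_threshold_center (Δ δ₁ δ₂ lam : ℝ) (hΔ : 0 < Δ)
    (h1 : 0 ≤ δ₁) (h2 : 0 ≤ δ₂) (h12 : δ₁ + δ₂ ≤ 1)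
    (hc : 1 > max (2*δ₁ + δ₂) (2*δ₂ + δ₁))
    (hlam1 : Δ * max δ₁ δ₂ ≤ lam) (hlam2 : lam < (1 - δ₁ - δ₂) * Δ)
    (fx : ℤ → ℝ)
    (hfm2 : fx (-2) = δ₁ * Δ) (hfm1 : fx (-1) = (1 - δ₁ - δ₂) * Δ) (hf0 : fx 0 = δ₂ * Δ)
    (hfz : ∀ x : ℤ, x ≠ -2 → x ≠ -1 → x ≠ 0 → fx x = 0)
    (ux : ℤ → ℝ) (hux : ∀ x, ux x = Real.sign (fx x) * max (|fx x| - lam) 0) :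
    (∀ x : ℤ, x ≠ -1 → ux x = 0) ∧
    ux (-1) = max ((1 - δ₁ - δ₂) * Δ - lam) 0 ∧
    (lam = Δ * max δ₁ δ₂ → ux (-1) = (1 - δ₁ - δ₂ - max δ₁ δ₂) * Δ) := by
  have hd1 : δ₁ * Δ ≤ lam := le_trans (by nlinarith [le_max_left δ₁ δ₂]) hlam1
  have hd2 : δ₂ * Δ ≤ lam := le_trans (by nlinarith [le_max_right δ₁ δ₂]) hlam1
  have habs1 : |δ₁ * Δ| = δ₁ * Δ := abs_of_nonneg (by positivity)
  have habs2 : |δ₂ * Δ| = δ₂ * Δ := abs_of_nonneg (by positivity)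
  have hm1pos : 0 < (1 - δ₁ - δ₂) * Δ := by
    have : 0 ≤ lam := le_trans (by positivity) hlam1
    linarith
  have hm1 : ux (-1) = max ((1 - δ₁ - δ₂) * Δ - lam) 0 := by
    rw [hux, hfm1, Real.sign_of_pos hm1pos, abs_of_pos hm1pos, one_mul]
  refine ⟨?_, hm1, ?_⟩
  · intro x hx
    rw [hux]
    by_cases h2' : x = -2
    · subst h2'
      rw [hfm2, habs1, max_eq_right (by linarith), mul_zero]
    · by_cases h0 : x = 0
      · subst h0
        rw [hf0, habs2, max_eq_right (by linarith), mul_zero]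
      · rw [hfz x h2' hx h0]
        simp [Real.sign_zero]
  · intro h
    rw [hm1, h, max_eq_left (by nlinarith)]
    ring
end

section
/- Let û be a two-level step signal: û[x] = Û₁ for x ∈ [−L₁, −1], û[x] = Û₂ for x ∈ [0, L₂], and let f be the blurred step f[x] = U₁ for x ∈ [−L₁+1, −2], f[−1] = U₁ + δ₁(U₂−U₁), f[0] = U₂ − δ₂(U₂−U₁), f[x] = U₂ for x ∈ [1, L₂−1]. Suppose Û₁ ≥ U₁ + δ₁(U₂−U₁) and Û₂ ≤ U₂ − δ₂(U₂−U₁), U₁ < U₂, Û₁ < Û₂. Then over all 3-tap kernels k parameterized by k[1] = d₁, k[−1] = d₂, k[0] = 1 − d₁ − d₂ with d₁, d₂ ≥ 0, d₁ + d₂ ≤ 1, the cost Σ_{x=−L₁+1}^{L₂−1} ((k ∗ û)[x] − f[x])² is minimized at d₁ = d₂ = 0, i.e., k equals the Dirac delta. -/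
/-- AM kernel step stuck at no-blur: among nonnegative sum-to-one 3-tap kernels, the
data-fitting cost of matching the blurred step with the TV-denoised step is minimized
by the Dirac delta (`d₁ = d₂ = 0`). -/
theorem am_kernel_step_dirac (L₁ L₂ : ℤ) (hL₁ : 2 < L₁) (hL₂ : 2 < L₂)
    (U₁ U₂ V₁ V₂ δ₁ δ₂ : ℝ) (hU : U₁ < U₂) (hV : V₁ < V₂)
    (h1 : 0 ≤ δ₁) (h2 : 0 ≤ δ₂) (h12 : δ₁ + δ₂ ≤ 1)
    (hV1 : U₁ + δ₁ * (U₂ - U₁) ≤ V₁) (hV2 : V₂ ≤ U₂ - δ₂ * (U₂ - U₁))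
    (uh f : ℤ → ℝ)
    (huh1 : ∀ x, -L₁ ≤ x → x ≤ -1 → uh x = V₁)
    (huh2 : ∀ x, 0 ≤ x → x ≤ L₂ → uh x = V₂)
    (hf1 : ∀ x, -L₁ + 1 ≤ x → x ≤ -2 → f x = U₁)
    (hfm1 : f (-1) = U₁ + δ₁ * (U₂ - U₁))
    (hf0 : f 0 = U₂ - δ₂ * (U₂ - U₁))
    (hf2 : ∀ x, 1 ≤ x → x ≤ L₂ - 1 → f x = U₂)
    (C : ℝ → ℝ → ℝ)
    (hC : ∀ d₁ d₂, C d₁ d₂ = ∑ x ∈ Finset.Icc (-L₁ + 1) (L₂ - 1),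
      ((d₁ * uh (x - 1) + d₂ * uh (x + 1) + (1 - d₁ - d₂) * uh x) - f x)^2) :
    ∀ d₁ d₂ : ℝ, 0 ≤ d₁ → 0 ≤ d₂ → d₁ + d₂ ≤ 1 → C 0 0 ≤ C d₁ d₂ := by
  intro d₁ d₂ hd1 hd2 hsum
  rw [hC, hC]
  apply Finset.sum_le_sum
  intro x hx
  simp only [Finset.mem_Icc] at hx
  obtain ⟨hxl, hxr⟩ := hx
  have hb : 0 ≤ V₂ - V₁ := by linarith
  rcases lt_trichotomy x (-1) with hlt | heq | hgt
  · have e1 : uh (x - 1) = V₁ := huh1 _ (by omega) (by omega)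
    have e2 : uh (x + 1) = V₁ := huh1 _ (by omega) (by omega)
    have e3 : uh x = V₁ := huh1 _ (by omega) (by omega)
    rw [e1, e2, e3]
    apply le_of_eq
    ring
  · subst heq
    have e1 : uh (-1 - 1) = V₁ := huh1 _ (by omega) (by omega)
    have e2 : uh (-1 + 1) = V₂ := huh2 _ (by omega) (by omega)
    have e3 : uh (-1) = V₁ := huh1 _ (by omega) (by omega)
    rw [e1, e2, e3, hfm1]
    have ha : 0 ≤ V₁ - (U₁ + δ₁ * (U₂ - U₁)) := by linarith
    nlinarith [mul_nonneg hd2 hb, mul_nonneg (mul_nonneg hd2 hb) ha,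
      sq_nonneg (d₂ * (V₂ - V₁))]
  · rcases eq_or_lt_of_le (by omega : (0:ℤ) ≤ x) with heq0 | hpos
    · subst heq0
      have e1 : uh (0 - 1) = V₁ := huh1 _ (by omega) (by omega)
      have e2 : uh (0 + 1) = V₂ := huh2 _ (by omega) (by omega)
      have e3 : uh 0 = V₂ := huh2 _ (by omega) (by omega)
      rw [e1, e2, e3, hf0]
      have ha : 0 ≤ U₂ - δ₂ * (U₂ - U₁) - V₂ := by linarith
      nlinarith [mul_nonneg hd1 hb, mul_nonneg (mul_nonneg hd1 hb) ha,
        sq_nonneg (d₁ * (V₂ - V₁))]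
    · have e1 : uh (x - 1) = V₂ := huh2 _ (by omega) (by omega)
      have e2 : uh (x + 1) = V₂ := huh2 _ (by omega) (by omega)
      have e3 : uh x = V₂ := huh2 _ (by omega) (by omega)
      rw [e1, e2, e3]
      apply le_of_eq
      ring
end

section
/- Let f be the blurred step from the 3-tap model (f = U₁ on [−L₁+1,−2], f[−1] = U₁ + δ₁Δ, f[0] = U₂ − δ₂Δ, f = U₂ on [1,L₂−1], Δ = U₂ − U₁ > 0, L₁, L₂ > 2). Suppose λ satisfies Δ·max((L₁−2)δ₁, (L₂−1)δ₂) ≤ λ < Δ·(L₂(L₁−1) − L₂δ₁ − (L₁−1)δ₂)/(L₁+L₂−1). Then the two-level signal û with û = U₁ + (δ₁Δ + λ)/(L₁−1) on [−L₁+1, −1] and û = U₂ − (δ₂Δ + λ)/L₂ on [0, L₂−1] satisfies the subgradient optimality conditions for the 1D TV denoising problem min_u (1/2)Σ_{x=−L₁+1}^{L₂−1}(u[x] − f[x])² + λ Σ_{x=−L₁+1}^{L₂−2}|u[x+1] − u[x]|, and hence is its unique minimizer. -/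
set_option maxHeartbeats 1000000 in
/-- Central branch of Proposition 1: for intermediate `λ`, the two-level signal with
jump at `x = 0` and values contracted toward each other is the unique minimizer of the
1D TV denoising problem for the blurred step. -/
theorem tv_denoising_blurred_step_center (L₁ L₂ : ℤ) (hL₁ : 2 < L₁) (hL₂ : 2 < L₂)
    (U₁ U₂ δ₁ δ₂ lam : ℝ) (hU : U₁ < U₂)
    (h1 : 0 ≤ δ₁) (h2 : 0 ≤ δ₂) (h12 : δ₁ + δ₂ ≤ 1)
    (hlam1 : (U₂ - U₁) * max (((L₁ : ℝ) - 2) * δ₁) (((L₂ : ℝ) - 1) * δ₂) ≤ lam)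
    (hlam2 : lam < (U₂ - U₁) *
      (((L₂ : ℝ) * ((L₁ : ℝ) - 1) - (L₂ : ℝ) * δ₁ - ((L₁ : ℝ) - 1) * δ₂) /
        ((L₁ : ℝ) + (L₂ : ℝ) - 1)))
    (f : ℤ → ℝ)
    (hf1 : ∀ x, -L₁ + 1 ≤ x → x ≤ -2 → f x = U₁)
    (hfm1 : f (-1) = U₁ + δ₁ * (U₂ - U₁))
    (hf0 : f 0 = U₂ - δ₂ * (U₂ - U₁))
    (hf2 : ∀ x, 1 ≤ x → x ≤ L₂ - 1 → f x = U₂)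
    (uh : ℤ → ℝ)
    (huh1 : ∀ x, -L₁ + 1 ≤ x → x ≤ -1 → uh x = U₁ + (δ₁ * (U₂ - U₁) + lam) / ((L₁ : ℝ) - 1))
    (huh2 : ∀ x, 0 ≤ x → x ≤ L₂ - 1 → uh x = U₂ - (δ₂ * (U₂ - U₁) + lam) / (L₂ : ℝ))
    (F : (ℤ → ℝ) → ℝ)
    (hF : ∀ u, F u = (1/2) * ∑ x ∈ Finset.Icc (-L₁ + 1) (L₂ - 1), (u x - f x)^2
        + lam * ∑ x ∈ Finset.Icc (-L₁ + 1) (L₂ - 2), |u (x + 1) - u x|) :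
    (∀ u : ℤ → ℝ, F uh ≤ F u) ∧
    (∀ u : ℤ → ℝ, F u = F uh → ∀ x ∈ Finset.Icc (-L₁ + 1) (L₂ - 1), u x = uh x) := by
  have hL1R : (2:ℝ) < (L₁:ℝ) := by exact_mod_cast hL₁
  have hL2R : (2:ℝ) < (L₂:ℝ) := by exact_mod_cast hL₂
  have hL1pos : (0:ℝ) < (L₁:ℝ) - 1 := by linarith
  have hL2pos : (0:ℝ) < (L₂:ℝ) := by linarith
  have hΔ : (0:ℝ) < U₂ - U₁ := sub_pos.mpr hU
  set Δ : ℝ := U₂ - U₁ with hΔdef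
  set a : ℝ := (δ₁ * Δ + lam) / ((L₁:ℝ) - 1) with hadef
  set b : ℝ := (δ₂ * Δ + lam) / (L₂:ℝ) with hbdef
  have ha : a * ((L₁:ℝ) - 1) = δ₁ * Δ + lam := div_mul_cancel₀ _ (ne_of_gt hL1pos)
  have hb : b * (L₂:ℝ) = δ₂ * Δ + lam := div_mul_cancel₀ _ (ne_of_gt hL2pos)
  have h1' : Δ * (((L₁:ℝ)-2)*δ₁) ≤ lam :=
    le_trans (mul_le_mul_of_nonneg_left (le_max_left _ _) hΔ.le) hlam1
  have h2' : Δ * (((L₂:ℝ)-1)*δ₂) ≤ lam :=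
    le_trans (mul_le_mul_of_nonneg_left (le_max_right _ _) hΔ.le) hlam1
  have hlam0 : 0 ≤ lam := by
    have h0 : (0:ℝ) ≤ Δ * (((L₁:ℝ)-2)*δ₁) :=
      mul_nonneg hΔ.le (mul_nonneg (by linarith) h1)
    linarith
  have ha0 : 0 ≤ a := div_nonneg (by nlinarith) hL1pos.le
  have hb0 : 0 ≤ b := div_nonneg (by nlinarith) hL2pos.le
  have hub_a : ((L₁:ℝ)-2) * a ≤ lam := by
    rw [hadef, ← mul_div_assoc, div_le_iff₀ hL1pos]
    nlinarith [h1']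
  have hδ₂b : δ₂ * Δ ≤ b := by
    rw [hbdef, le_div_iff₀ hL2pos]
    nlinarith [h2']
  -- the jump of uh at the edge -1 → 0 is positive
  have hden : (0:ℝ) < (L₁:ℝ) + (L₂:ℝ) - 1 := by linarith
  have hlam2' : lam * ((L₁:ℝ) + (L₂:ℝ) - 1) <
      Δ * ((L₂:ℝ) * ((L₁:ℝ) - 1) - (L₂:ℝ) * δ₁ - ((L₁:ℝ) - 1) * δ₂) := by
    rw [mul_div_assoc'] at hlam2
    exact (lt_div_iff₀ hden).mp hlam2
  have hjump : 0 < Δ - a - b := by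
    have hab : a + b < Δ := by
      rw [hadef, hbdef, div_add_div _ _ (ne_of_gt hL1pos) (ne_of_gt hL2pos),
        div_lt_iff₀ (mul_pos hL1pos hL2pos)]
      nlinarith [hlam2']
    linarith
  clear_value Δ a b
  -- dual certificate
  obtain ⟨p, hpval1, hpval2, hpval3, hpval4, hpval5⟩ :
      ∃ p : ℤ → ℝ,
        (∀ x : ℤ, x ≤ -L₁ → p x = 0) ∧
        (∀ x : ℤ, -L₁ < x → x ≤ -2 → p x = ((x:ℝ) + (L₁:ℝ)) * a) ∧
        (p (-1) = lam) ∧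
        (∀ x : ℤ, 0 ≤ x → x ≤ L₂ - 2 → p x = lam + δ₂ * Δ - ((x:ℝ) + 1) * b) ∧
        (∀ x : ℤ, L₂ - 2 < x → p x = 0) := by
    refine ⟨fun x => if x ≤ -L₁ then 0 else if x ≤ -2 then ((x:ℝ) + (L₁:ℝ)) * a
      else if x = -1 then lam
      else if x ≤ L₂ - 2 then lam + δ₂ * Δ - ((x:ℝ) + 1) * b else 0,
      ?_, ?_, ?_, ?_, ?_⟩
    · intro x hx; dsimp only; rw [if_pos hx]
    · intro x h1x h2x; dsimp only
      rw [if_neg (show ¬ x ≤ -L₁ by omega), if_pos h2x]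
    · dsimp only
      rw [if_neg (show ¬ (-1:ℤ) ≤ -L₁ by omega),
        if_neg (show ¬ (-1:ℤ) ≤ -2 by norm_num),
        if_pos (rfl : (-1:ℤ) = -1)]
    · intro x h1x h2x; dsimp only
      rw [if_neg (show ¬ x ≤ -L₁ by omega), if_neg (show ¬ x ≤ -2 by omega),
        if_neg (show ¬ x = -1 by omega), if_pos h2x]
    · intro x hx; dsimp only
      rw [if_neg (show ¬ x ≤ -L₁ by omega), if_neg (show ¬ x ≤ -2 by omega),
        if_neg (show ¬ x = -1 by omega), if_neg (show ¬ x ≤ L₂ - 2 by omega)]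
  have hpbound : ∀ x : ℤ, 0 ≤ p x ∧ p x ≤ lam := by
    intro x
    rcases le_or_gt x (-L₁) with h | h
    · rw [hpval1 x h]; exact ⟨le_refl _, hlam0⟩
    rcases le_or_gt x (-2) with h2 | h2
    · rw [hpval2 x h h2]
      have hx1 : (1:ℝ) ≤ (x:ℝ) + (L₁:ℝ) := by
        have h' : (1:ℤ) ≤ x + L₁ := by omega
        exact_mod_cast h'
      have hx2 : (x:ℝ) + (L₁:ℝ) ≤ (L₁:ℝ) - 2 := by
        have h' : x + L₁ ≤ L₁ - 2 := by omega
        have h'' : ((x + L₁ : ℤ) : ℝ) ≤ ((L₁ - 2 : ℤ) : ℝ) := by exact_mod_cast h'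
        push_cast at h''; linarith
      constructor
      · exact mul_nonneg (by linarith) ha0
      · calc ((x:ℝ) + (L₁:ℝ)) * a ≤ ((L₁:ℝ) - 2) * a :=
              mul_le_mul_of_nonneg_right hx2 ha0
          _ ≤ lam := hub_a
    rcases eq_or_ne x (-1) with h3 | h3
    · subst h3; rw [hpval3]; exact ⟨hlam0, le_refl _⟩
    rcases le_or_gt x (L₂ - 2) with h4 | h4
    · have hx0 : 0 ≤ x := by omega
      rw [hpval4 x hx0 h4]
      have hx1 : (1:ℝ) ≤ (x:ℝ) + 1 := by
        have h'' : ((0:ℤ):ℝ) ≤ ((x:ℤ):ℝ) := by exact_mod_cast hx0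
        push_cast at h''; linarith
      have hx2 : (x:ℝ) + 1 ≤ (L₂:ℝ) - 1 := by
        have h' : x + 1 ≤ L₂ - 1 := by omega
        have h'' : ((x + 1 : ℤ) : ℝ) ≤ ((L₂ - 1 : ℤ) : ℝ) := by exact_mod_cast h'
        push_cast at h''; linarith
      constructor
      · have hmul : ((x:ℝ) + 1) * b ≤ (L₂:ℝ) * b :=
          mul_le_mul_of_nonneg_right (by linarith) hb0
        linarith [hb]
      · have hmul : b ≤ ((x:ℝ) + 1) * b := le_mul_of_one_le_left hb0 hx1
        linarith [hδ₂b]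
    · rw [hpval5 x h4]; exact ⟨le_refl _, hlam0⟩
  -- telescoping: divergence of p equals the residual
  have hpdiff : ∀ x ∈ Finset.Icc (-L₁ + 1) (L₂ - 1), p x - p (x - 1) = uh x - f x := by
    intro x hx
    rw [Finset.mem_Icc] at hx
    obtain ⟨hxl, hxr⟩ := hx
    have hle : x ≤ -2 ∨ x = -1 ∨ x = 0 ∨ (1 ≤ x ∧ x ≤ L₂ - 2) ∨ x = L₂ - 1 := by omega
    rcases hle with h | h | h | ⟨h1x, h2x⟩ | h
    · -- left plateau
      have e1 : p x = ((x:ℝ) + (L₁:ℝ)) * a := hpval2 x (by omega) h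
      have e2 : p (x - 1) = ((x:ℝ) - 1 + (L₁:ℝ)) * a := by
        rcases eq_or_lt_of_le hxl with heq | hlt
        · rw [hpval1 (x-1) (by omega)]
          have : (x:ℝ) = -(L₁:ℝ) + 1 := by exact_mod_cast heq.symm
          rw [this]; ring
        · rw [hpval2 (x-1) (by omega) (by omega)]; push_cast; ring
      rw [e1, e2, hf1 x hxl h, huh1 x hxl (by omega)]
      ring
    · subst h
      have e2 : p (-1 - 1) = ((-2:ℝ) + (L₁:ℝ)) * a := by
        rw [show (-1 - 1 : ℤ) = -2 by ring, hpval2 (-2) (by omega) (by omega)]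
        push_cast; ring
      rw [hpval3, e2, hfm1, huh1 (-1) (by omega) (by omega)]
      linear_combination -ha
    · subst h
      have e1 : p 0 = lam + δ₂ * Δ - b := by
        rw [hpval4 0 le_rfl (by omega)]; norm_num
      rw [e1, show (0 - 1 : ℤ) = -1 by ring, hpval3, hf0, huh2 0 le_rfl (by omega)]
      ring
    · -- right plateau (interior)
      have e1 : p x = lam + δ₂ * Δ - ((x:ℝ) + 1) * b := hpval4 x (by omega) h2x
      have e2 : p (x - 1) = lam + δ₂ * Δ - ((x:ℝ)) * b := by
        rw [hpval4 (x-1) (by omega) (by omega)]; push_cast; ring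
      rw [e1, e2, hf2 x h1x (by omega), huh2 x (by omega) (by omega)]
      ring
    · subst h
      have e1 : p (L₂ - 1) = 0 := hpval5 _ (by omega)
      have e2 : p (L₂ - 1 - 1) = lam + δ₂ * Δ - ((L₂:ℝ) - 1) * b := by
        rw [show L₂ - 1 - 1 = L₂ - 2 by ring, hpval4 (L₂ - 2) (by omega) le_rfl]
        push_cast; ring
      rw [e1, e2, hf2 (L₂ - 1) (by omega) le_rfl, huh2 (L₂ - 1) (by omega) le_rfl]
      linear_combination hb
  -- boundary values
  have hpm : p (-L₁ + 1 - 1) = 0 := hpval1 _ (by omega)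
  have hpM : p (L₂ - 1) = 0 := hpval5 _ (by omega)
  -- Abel summation
  have hAbel : ∀ g : ℤ → ℝ,
      ∑ x ∈ Finset.Icc (-L₁ + 1) (L₂ - 1), (p x - p (x - 1)) * g x
        = ∑ x ∈ Finset.Icc (-L₁ + 1) (L₂ - 2), p x * (g x - g (x + 1)) := by
    intro g
    have e1 : Finset.Icc (-L₁ + 1) (L₂ - 1)
        = insert (L₂ - 1) (Finset.Icc (-L₁ + 1) (L₂ - 2)) := by
      ext z; simp only [Finset.mem_Icc, Finset.mem_insert]; omega
    have e2 : Finset.Icc (-L₁ + 1 - 1) (L₂ - 2)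
        = insert (-L₁ + 1 - 1) (Finset.Icc (-L₁ + 1) (L₂ - 2)) := by
      ext z; simp only [Finset.mem_Icc, Finset.mem_insert]; omega
    have hni1 : (L₂ - 1) ∉ Finset.Icc (-L₁ + 1) (L₂ - 2) := by
      simp only [Finset.mem_Icc]; omega
    have hni2 : (-L₁ + 1 - 1) ∉ Finset.Icc (-L₁ + 1) (L₂ - 2) := by
      simp only [Finset.mem_Icc]; omega
    have reindex : ∑ x ∈ Finset.Icc (-L₁ + 1) (L₂ - 1), p (x - 1) * g x
        = ∑ x ∈ Finset.Icc (-L₁ + 1 - 1) (L₂ - 2), p x * g (x + 1) := by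
      rw [show Finset.Icc (-L₁ + 1) (L₂ - 1)
            = Finset.map (addRightEmbedding 1) (Finset.Icc (-L₁ + 1 - 1) (L₂ - 2)) by
          rw [Finset.map_add_right_Icc]; congr 1 <;> ring,
        Finset.sum_map]
      refine Finset.sum_congr rfl fun x _ => ?_
      simp [addRightEmbedding]
    have expand : ∑ x ∈ Finset.Icc (-L₁ + 1) (L₂ - 1), (p x - p (x - 1)) * g x
        = ∑ x ∈ Finset.Icc (-L₁ + 1) (L₂ - 1), (p x * g x - p (x - 1) * g x) :=
      Finset.sum_congr rfl fun x _ => by ring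
    rw [expand, Finset.sum_sub_distrib, reindex, e1, Finset.sum_insert hni1, e2,
      Finset.sum_insert hni2, hpm, hpM]
    simp only [zero_mul, zero_add, add_zero]
    rw [← Finset.sum_sub_distrib]
    exact Finset.sum_congr rfl fun x _ => by ring
  -- certificate matches uh on differences
  have S3 : ∀ x ∈ Finset.Icc (-L₁ + 1) (L₂ - 2),
      lam * |uh (x + 1) - uh x| = p x * (uh (x + 1) - uh x) := by
    intro x hx
    rw [Finset.mem_Icc] at hx
    rcases eq_or_ne x (-1) with h | h
    · subst h
      have e1 : uh (-1 + 1) = U₂ - b := by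
        rw [show (-1 + 1 : ℤ) = 0 by ring, huh2 0 le_rfl (by omega)]
      have e2 : uh (-1) = U₁ + a := by rw [huh1 (-1) (by omega) (by omega)]
      rw [e1, e2, hpval3, show U₂ - b - (U₁ + a) = Δ - a - b by rw [hΔdef]; ring,
        abs_of_pos hjump]
    · have hd : uh (x + 1) - uh x = 0 := by
        rcases (by omega : x ≤ -2 ∨ 0 ≤ x) with h' | h'
        · rw [huh1 (x+1) (by omega) (by omega), huh1 x (by omega) (by omega)]; ring
        · rw [huh2 (x+1) (by omega) (by omega), huh2 x (by omega) (by omega)]; ring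
      rw [hd]; simp
  -- key identity
  have hkey : ∀ u : ℤ → ℝ, F u = F uh
      + (1/2) * ∑ x ∈ Finset.Icc (-L₁ + 1) (L₂ - 1), (u x - uh x)^2
      + ∑ x ∈ Finset.Icc (-L₁ + 1) (L₂ - 2),
          (lam * |u (x + 1) - u x| - p x * (u (x + 1) - u x)) := by
    intro u
    rw [hF u, hF uh]
    have S1 : ∑ x ∈ Finset.Icc (-L₁ + 1) (L₂ - 1), (u x - f x)^2
        = ∑ x ∈ Finset.Icc (-L₁ + 1) (L₂ - 1), (uh x - f x)^2
          + ∑ x ∈ Finset.Icc (-L₁ + 1) (L₂ - 1), (u x - uh x)^2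
          + 2 * ∑ x ∈ Finset.Icc (-L₁ + 1) (L₂ - 1), (uh x - f x) * (u x - uh x) := by
      rw [Finset.mul_sum, ← Finset.sum_add_distrib, ← Finset.sum_add_distrib]
      exact Finset.sum_congr rfl fun x _ => by ring
    have S2 : ∑ x ∈ Finset.Icc (-L₁ + 1) (L₂ - 1), (uh x - f x) * (u x - uh x)
        = ∑ x ∈ Finset.Icc (-L₁ + 1) (L₂ - 2),
            p x * ((u x - uh x) - (u (x + 1) - uh (x + 1))) := by
      rw [← hAbel (fun x => u x - uh x)]
      exact Finset.sum_congr rfl fun x hx => by rw [hpdiff x hx]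
    have S2' : ∑ x ∈ Finset.Icc (-L₁ + 1) (L₂ - 2),
          p x * ((u x - uh x) - (u (x + 1) - uh (x + 1)))
        = ∑ x ∈ Finset.Icc (-L₁ + 1) (L₂ - 2), p x * (uh (x + 1) - uh x)
          - ∑ x ∈ Finset.Icc (-L₁ + 1) (L₂ - 2), p x * (u (x + 1) - u x) := by
      rw [← Finset.sum_sub_distrib]
      exact Finset.sum_congr rfl fun x _ => by ring
    have S3' : lam * ∑ x ∈ Finset.Icc (-L₁ + 1) (L₂ - 2), |uh (x + 1) - uh x|
        = ∑ x ∈ Finset.Icc (-L₁ + 1) (L₂ - 2), p x * (uh (x + 1) - uh x) := by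
      rw [Finset.mul_sum]
      exact Finset.sum_congr rfl S3
    have S4 : ∑ x ∈ Finset.Icc (-L₁ + 1) (L₂ - 2),
          (lam * |u (x + 1) - u x| - p x * (u (x + 1) - u x))
        = lam * ∑ x ∈ Finset.Icc (-L₁ + 1) (L₂ - 2), |u (x + 1) - u x|
          - ∑ x ∈ Finset.Icc (-L₁ + 1) (L₂ - 2), p x * (u (x + 1) - u x) := by
      rw [Finset.sum_sub_distrib, Finset.mul_sum]
    rw [S2'] at S2
    linarith [S1, S2, S3', S4]
  have hnonneg : ∀ u : ℤ → ℝ, ∀ x ∈ Finset.Icc (-L₁ + 1) (L₂ - 2),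
      0 ≤ lam * |u (x + 1) - u x| - p x * (u (x + 1) - u x) := by
    intro u x _
    obtain ⟨hp0, hpl⟩ := hpbound x
    have habs : |p x| ≤ lam := abs_le.mpr ⟨by linarith, hpl⟩
    have : p x * (u (x + 1) - u x) ≤ lam * |u (x + 1) - u x| :=
      calc p x * (u (x + 1) - u x) ≤ |p x * (u (x + 1) - u x)| := le_abs_self _
        _ = |p x| * |u (x + 1) - u x| := abs_mul _ _
        _ ≤ lam * |u (x + 1) - u x| :=
            mul_le_mul_of_nonneg_right habs (abs_nonneg _)
    linarith
  constructor
  · intro u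
    have hQ : 0 ≤ ∑ x ∈ Finset.Icc (-L₁ + 1) (L₂ - 1), (u x - uh x)^2 :=
      Finset.sum_nonneg fun x _ => sq_nonneg _
    have hR : 0 ≤ ∑ x ∈ Finset.Icc (-L₁ + 1) (L₂ - 2),
        (lam * |u (x + 1) - u x| - p x * (u (x + 1) - u x)) :=
      Finset.sum_nonneg (hnonneg u)
    have := hkey u
    linarith
  · intro u hu x hx
    have hQ : 0 ≤ ∑ x ∈ Finset.Icc (-L₁ + 1) (L₂ - 1), (u x - uh x)^2 :=
      Finset.sum_nonneg fun x _ => sq_nonneg _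
    have hR : 0 ≤ ∑ x ∈ Finset.Icc (-L₁ + 1) (L₂ - 2),
        (lam * |u (x + 1) - u x| - p x * (u (x + 1) - u x)) :=
      Finset.sum_nonneg (hnonneg u)
    have hk := hkey u
    rw [hu] at hk
    have hQ0 : ∑ x ∈ Finset.Icc (-L₁ + 1) (L₂ - 1), (u x - uh x)^2 = 0 := by linarith
    have := (Finset.sum_eq_zero_iff_of_nonneg fun x _ => sq_nonneg (u x - uh x)).mp hQ0 x hx
    have := sq_eq_zero_iff.mp this
    linarith [this]
end
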